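/- Let (φ_N) be a Hörmander sequence with constant C₁. Then there exists C>0 depending only on C₁ such that for every continuous f:ℝ²→ℝ with supp f ⊂ {(x,y): y ≥ x²}, every 0<ε<1 and ε²/4 ≤ γ < 1, every integer N≥1 and every 0 ≤ k ≤ N, |m_k(M_{φ_N,ε,γ}[f])| ≤ (C/ε)^{k+1} · e^N · ‖R[f]‖_{ε,γ}. -/

import Mathlib

open MeasureTheory Set

/-- The Radon transform `R[f](ξ,η) = ∫ f(x, ξx+η) dx`. -/
noncomputable def radon (f : ℝ → ℝ → ℝ) (ξ η : ℝ) : ℝ :=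
  ∫ x : ℝ, f x (ξ * x + η)

/-- The mean `M_{φ,ε,γ}[f](x)`: convolution of `f(x,·)` with `φ_{ε|x|}` at `γ`,
with the convention `M_{φ,ε,γ}[f](0) = f(0,γ)`. -/
noncomputable def mean (φ : ℝ → ℝ) (ε γ : ℝ) (f : ℝ → ℝ → ℝ) (x : ℝ) : ℝ :=
  if x = 0 then f 0 γ
  else ∫ y : ℝ, f x y * ((ε * |x|)⁻¹ * φ ((γ - y) / (ε * |x|)))

/-- The data norm `‖g‖_{ε,γ} = sup_{|η|≤γ} ∫_{|ξ|≤ε} |g(ξ,η)| dξ`. -/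
noncomputable def dataNorm (g : ℝ → ℝ → ℝ) (ε γ : ℝ) : ℝ :=
  ⨆ η : Icc (-γ) γ, ∫ ξ in Icc (-ε) ε, |g ξ (η : ℝ)|

/-! ### Auxiliary lemmas -/

lemma aux_integral_eq_intervalIntegral {h : ℝ → ℝ} {a b : ℝ} (hab : a ≤ b)
    (hsupp : ∀ x, x ∉ Ioc a b → h x = 0) :
    (∫ x : ℝ, h x) = ∫ x in a..b, h x := by
  rw [intervalIntegral.integral_of_le hab, ← MeasureTheory.integral_indicator measurableSet_Ioc]
  congr 1
  funext x
  by_cases hx : x ∈ Ioc a b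
  · simp [Set.indicator_of_mem hx]
  · simp [Set.indicator_of_notMem hx, hsupp x hx]

lemma aux_swap {F : ℝ → ℝ → ℝ} (hF : Continuous fun p : ℝ × ℝ => F p.1 p.2)
    {a b c d : ℝ} (hab : a ≤ b) (hcd : c ≤ d) :
    (∫ x in a..b, ∫ y in c..d, F x y) = ∫ y in c..d, ∫ x in a..b, F x y := by
  rw [intervalIntegral.integral_of_le hab, intervalIntegral.integral_of_le hcd]
  simp_rw [intervalIntegral.integral_of_le hcd, intervalIntegral.integral_of_le hab]
  apply MeasureTheory.integral_integral_swap
  rw [Measure.prod_restrict]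
  have h1 : IntegrableOn (Function.uncurry F) (Icc a b ×ˢ Icc c d) (volume.prod volume) := by
    rw [← Measure.volume_eq_prod]
    exact hF.continuousOn.integrableOn_compact (isCompact_Icc.prod isCompact_Icc)
  exact h1.mono_set (Set.prod_mono Ioc_subset_Icc_self Ioc_subset_Icc_self)

noncomputable def Fit (g : ℝ → ℝ) : ℕ → ℝ → ℝ
  | 0 => g
  | j+1 => fun t => ∫ u in (0:ℝ)..t, Fit g j u

lemma Fit_cont {g : ℝ → ℝ} (hg : Continuous g) : ∀ j, Continuous (Fit g j)
  | 0 => hg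
  | (j+1) =>
    intervalIntegral.continuous_primitive
      (fun a b => (Fit_cont hg j).intervalIntegrable a b) 0

lemma Fit_succ_hasDerivAt {g : ℝ → ℝ} (hg : Continuous g) (j : ℕ) (t : ℝ) :
    HasDerivAt (Fit g (j+1)) (Fit g j t) t :=
  ((Fit_cont hg j).integral_hasStrictDerivAt 0 t).hasDerivAt

lemma Fit_eq_zero {g : ℝ → ℝ} {c : ℝ} (hc : 0 ≤ c) (hz : ∀ t, t ≤ c → g t = 0) :
    ∀ j t, t ≤ c → Fit g j t = 0
  | 0, t, ht => hz t ht
  | (j+1), t, ht => by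
      show (∫ u in (0:ℝ)..t, Fit g j u) = 0
      rw [intervalIntegral.integral_congr (g := fun _ => (0:ℝ))
        (fun u hu => Fit_eq_zero hc hz j u (le_trans hu.2 (sup_le hc ht)))]
      simp

noncomputable def Scau (g : ℝ → ℝ) (m : ℕ) (t : ℝ) : ℝ :=
  ∫ u in (0:ℝ)..t, ((t-u)^m / (m.factorial : ℝ)) * g u

noncomputable def Bcau (g : ℝ → ℝ) (m : ℕ) (t : ℝ) : ℝ :=
  ∫ u in (0:ℝ)..t, (-u)^m * g u

lemma Scau_cont {g : ℝ → ℝ} (hg : Continuous g) (m : ℕ) : Continuous (Scau g m) := by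
  have : Continuous (Function.uncurry fun (t u : ℝ) => ((t-u)^m / (m.factorial : ℝ)) * g u) := by
    apply Continuous.mul
    · exact (((continuous_fst.sub continuous_snd).pow m).div_const _)
    · exact hg.comp continuous_snd
  exact intervalIntegral.continuous_parametric_intervalIntegral_of_continuous this continuous_id

lemma Bcau_hasDerivAt {g : ℝ → ℝ} (hg : Continuous g) (m : ℕ) (t : ℝ) :
    HasDerivAt (Bcau g m) ((-t)^m * g t) t :=
  ((((continuous_neg.pow m).mul hg)).integral_hasStrictDerivAt 0 t).hasDerivAt

lemma Scau_expand {g : ℝ → ℝ} (hg : Continuous g) (m : ℕ) (t : ℝ) :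
    Scau g m t = ∑ i ∈ Finset.range (m+1),
      ((m.choose i : ℝ) / (m.factorial : ℝ) * t^i) * Bcau g (m-i) t := by
  unfold Scau Bcau
  have hpt : ∀ u : ℝ, ((t-u)^m / (m.factorial : ℝ)) * g u
      = ∑ i ∈ Finset.range (m+1),
          ((m.choose i : ℝ) / (m.factorial : ℝ) * t^i) * ((-u)^(m-i) * g u) := by
    intro u
    have h1 : (t - u)^m = ∑ i ∈ Finset.range (m+1), t^i * (-u)^(m-i) * (m.choose i : ℝ) := by
      rw [sub_eq_add_neg]
      exact add_pow t (-u) m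
    rw [h1, Finset.sum_div, Finset.sum_mul]
    apply Finset.sum_congr rfl
    intro i _
    ring
  rw [intervalIntegral.integral_congr (g := fun u => ∑ i ∈ Finset.range (m+1),
      ((m.choose i : ℝ) / (m.factorial : ℝ) * t^i) * ((-u)^(m-i) * g u)) (fun u _ => hpt u)]
  rw [intervalIntegral.integral_finset_sum]
  · apply Finset.sum_congr rfl
    intro i _
    rw [intervalIntegral.integral_const_mul]
  · intro i _
    exact (continuous_const.mul ((continuous_neg.pow _).mul hg)).intervalIntegrable _ _

lemma Scau_succ_hasDerivAt {g : ℝ → ℝ} (hg : Continuous g) (m : ℕ) (t : ℝ) :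
    HasDerivAt (Scau g (m+1)) (Scau g m t) t := by
  have hfun : Scau g (m+1) = fun s => ∑ i ∈ Finset.range (m+2),
      (((m+1).choose i : ℝ) / ((m+1).factorial : ℝ)) * (s^i * Bcau g (m+1-i) s) := by
    funext s
    rw [Scau_expand hg (m+1) s]
    exact Finset.sum_congr rfl (fun i _ => by ring)
  rw [hfun]
  have hterm : ∀ i ∈ Finset.range (m+2), HasDerivAt
      (fun s => (((m+1).choose i : ℝ) / ((m+1).factorial : ℝ)) * (s^i * Bcau g (m+1-i) s))
      ((((m+1).choose i : ℝ) / ((m+1).factorial : ℝ)) *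
        ((i:ℝ) * t^(i-1) * Bcau g (m+1-i) t + t^i * ((-t)^(m+1-i) * g t))) t := by
    intro i _
    exact ((hasDerivAt_pow i t).mul (Bcau_hasDerivAt hg (m+1-i) t)).const_mul _
  have hsum := HasDerivAt.sum hterm
  convert hsum using 1
  case e'_4 => rfl
  case e'_5 => rfl
  case e'_8 => ext s; simp only [Finset.sum_apply]
  have hsplit : ∀ i ∈ Finset.range (m+2),
      (((m+1).choose i : ℝ) / ((m+1).factorial : ℝ)) *
        ((i:ℝ) * t^(i-1) * Bcau g (m+1-i) t + t^i * ((-t)^(m+1-i) * g t))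
      = (((m+1).choose i : ℝ) / ((m+1).factorial : ℝ)) * ((i:ℝ) * t^(i-1) * Bcau g (m+1-i) t)
        + (t^i * (-t)^(m+1-i) * ((m+1).choose i : ℝ)) * (g t / ((m+1).factorial : ℝ)) := by
    intro i _; ring
  rw [Finset.sum_congr rfl hsplit, Finset.sum_add_distrib]
  have hzero : ∑ i ∈ Finset.range (m+2),
      (t^i * (-t)^(m+1-i) * ((m+1).choose i : ℝ)) * (g t / ((m+1).factorial : ℝ)) = 0 := by
    rw [← Finset.sum_mul, ← add_pow t (-t) (m+1)]
    simp
  rw [hzero, add_zero]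
  rw [Finset.sum_range_succ']
  simp only [Nat.cast_zero, zero_mul, mul_zero, zero_add, add_zero, pow_zero]
  rw [Scau_expand hg m t]
  apply Finset.sum_congr rfl
  intro i _
  have hcoef : (((m+1).choose (i+1) : ℝ) * ((i:ℝ)+1)) / ((m+1).factorial : ℝ)
      = ((m.choose i : ℝ)) / ((m.factorial : ℝ)) := by
    have h1 : (m+1) * m.choose i = (m+1).choose (i+1) * (i+1) := by
      simpa [Nat.succ_eq_add_one] using Nat.add_one_mul_choose_eq m i
    have h1' : ((m:ℝ)+1) * (m.choose i : ℝ) = ((m+1).choose (i+1) : ℝ) * ((i:ℝ)+1) := by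
      exact_mod_cast congrArg (Nat.cast : ℕ → ℝ) h1
    have h2 : ((m+1).factorial : ℝ) = ((m:ℝ)+1) * (m.factorial : ℝ) := by
      exact_mod_cast congrArg (Nat.cast : ℕ → ℝ) (Nat.factorial_succ m)
    have hm : (m.factorial : ℝ) ≠ 0 := Nat.cast_ne_zero.2 m.factorial_ne_zero
    have hm1 : ((m:ℝ)+1) ≠ 0 := by positivity
    rw [← h1', h2]
    field_simp
  have hidx : m + 1 - (i + 1) = m - i := by omega
  rw [hidx]
  rw [← hcoef]
  push_cast
  ring

lemma Fit_eq_Scau {g : ℝ → ℝ} (hg : Continuous g) : ∀ j (t : ℝ), Fit g (j+1) t = Scau g j t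
  | 0, t => by
    show (∫ u in (0:ℝ)..t, g u) = _
    unfold Scau
    refine (intervalIntegral.integral_congr fun u _ => ?_).symm
    simp
  | (j+1), t => by
    show (∫ u in (0:ℝ)..t, Fit g (j+1) u) = Scau g (j+1) t
    have h1 : (∫ u in (0:ℝ)..t, Fit g (j+1) u) = ∫ u in (0:ℝ)..t, Scau g j u :=
      intervalIntegral.integral_congr fun u _ => Fit_eq_Scau hg j u
    rw [h1]
    have hL : ∀ s, HasDerivAt (fun s => ∫ u in (0:ℝ)..s, Scau g j u) (Scau g j s) s :=
      fun s => ((Scau_cont hg j).integral_hasStrictDerivAt 0 s).hasDerivAt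
    have hR : ∀ s, HasDerivAt (Scau g (j+1)) (Scau g j s) s := Scau_succ_hasDerivAt hg j
    have hD : ∀ s, HasDerivAt (fun s => (∫ u in (0:ℝ)..s, Scau g j u) - Scau g (j+1) s) 0 s := by
      intro s
      have h := (hL s).sub (hR s); rw [sub_self] at h; exact h
    have hconst : ∀ s : ℝ, (∫ u in (0:ℝ)..s, Scau g j u) - Scau g (j+1) s
        = (∫ u in (0:ℝ)..(0:ℝ), Scau g j u) - Scau g (j+1) 0 :=
      fun s => is_const_of_deriv_eq_zero (fun s => (hD s).differentiableAt)
        (fun s => (hD s).deriv) s 0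
    have h0 : Scau g (j+1) 0 = 0 := by unfold Scau; simp
    have := hconst t
    rw [intervalIntegral.integral_same, h0] at this
    linarith

lemma iterD_hasDerivAt {ψ : ℝ → ℝ} (hψ : ContDiff ℝ (⊤:ℕ∞) ψ) (j : ℕ) (t : ℝ) :
    HasDerivAt (iteratedDeriv j ψ) (iteratedDeriv (j+1) ψ t) t := by
  have hd : DifferentiableAt ℝ (iteratedDeriv j ψ) t := by
    have := hψ.differentiable_iteratedDeriv j (by exact_mod_cast lt_top_iff_ne_top.2 (by simp))
    exact this.differentiableAt
  have := hd.hasDerivAt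
  rwa [← iteratedDeriv_succ] at this

lemma iterD_cont {ψ : ℝ → ℝ} (hψ : ContDiff ℝ (⊤:ℕ∞) ψ) (j : ℕ) :
    Continuous (iteratedDeriv j ψ) :=
  hψ.continuous_iteratedDeriv j (by exact_mod_cast le_top)

lemma key_ibp {ψ : ℝ → ℝ} (hψ : ContDiff ℝ (⊤:ℕ∞) ψ)
    (hψb : ∀ j (s : ℝ), s = 1 ∨ s = -1 → iteratedDeriv j ψ s = 0)
    {g : ℝ → ℝ} (hg : Continuous g) (x γ : ℝ) :
    ∀ j, x^j * (∫ ξ in (-1:ℝ)..1, ψ ξ * g (ξ*x+γ))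
      = (-1:ℝ)^j * ∫ ξ in (-1:ℝ)..1, iteratedDeriv j ψ ξ * Fit g j (ξ*x+γ)
  | 0 => by simp [iteratedDeriv_zero, Fit]
  | (j+1) => by
    have ih := key_ibp hψ hψb hg x γ j
    have hinner : ∀ ξ : ℝ, HasDerivAt (fun ξ : ℝ => ξ*x+γ) x ξ := by
      intro ξ
      simpa using ((hasDerivAt_id ξ).mul_const x).add_const γ
    have hv : ∀ ξ : ℝ, HasDerivAt (fun ξ => Fit g (j+1) (ξ*x+γ)) (Fit g j (ξ*x+γ) * x) ξ := by
      intro ξ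
      exact (Fit_succ_hasDerivAt hg j (ξ*x+γ)).comp ξ (hinner ξ)
    have hibp := intervalIntegral.integral_mul_deriv_eq_deriv_mul
      (u := iteratedDeriv j ψ) (u' := iteratedDeriv (j+1) ψ)
      (v := fun ξ => Fit g (j+1) (ξ*x+γ)) (v' := fun ξ => Fit g j (ξ*x+γ) * x)
      (a := (-1:ℝ)) (b := 1)
      (fun ξ _ => iterD_hasDerivAt hψ j ξ) (fun ξ _ => hv ξ)
      ((iterD_cont hψ (j+1)).intervalIntegrable _ _)
      ((((Fit_cont hg j).comp (by continuity : Continuous fun ξ:ℝ => ξ*x+γ)).mul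
        continuous_const).intervalIntegrable _ _)
    rw [hψb j 1 (Or.inl rfl), hψb j (-1) (Or.inr rfl)] at hibp
    simp only [zero_mul, sub_zero, zero_sub] at hibp
    have hpull : (∫ ξ in (-1:ℝ)..1, iteratedDeriv j ψ ξ * (Fit g j (ξ*x+γ) * x))
        = x * ∫ ξ in (-1:ℝ)..1, iteratedDeriv j ψ ξ * Fit g j (ξ*x+γ) := by
      rw [← intervalIntegral.integral_const_mul]
      exact intervalIntegral.integral_congr fun ξ _ => by ring
    rw [hpull] at hibp
    calc x^(j+1) * (∫ ξ in (-1:ℝ)..1, ψ ξ * g (ξ*x+γ))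
        = x * (x^j * ∫ ξ in (-1:ℝ)..1, ψ ξ * g (ξ*x+γ)) := by ring
      _ = x * ((-1:ℝ)^j * ∫ ξ in (-1:ℝ)..1, iteratedDeriv j ψ ξ * Fit g j (ξ*x+γ)) := by rw [ih]
      _ = (-1:ℝ)^j * (x * ∫ ξ in (-1:ℝ)..1, iteratedDeriv j ψ ξ * Fit g j (ξ*x+γ)) := by ring
      _ = (-1:ℝ)^j * (- ∫ ξ in (-1:ℝ)..1, iteratedDeriv (j+1) ψ ξ * Fit g (j+1) (ξ*x+γ)) := by
          rw [hibp]
      _ = (-1:ℝ)^(j+1) * ∫ ξ in (-1:ℝ)..1, iteratedDeriv (j+1) ψ ξ * Fit g (j+1) (ξ*x+γ) := by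
          ring

lemma aux_bound {D G : ℝ → ℝ} (hD : Continuous D) (hG : Continuous G) {ε M : ℝ}
    (hε1 : ε < 1) (hDsupp : ∀ ξ, ξ ∉ Icc (-ε) ε → D ξ = 0) (hDb : ∀ ξ, |D ξ| ≤ M) :
    |∫ ξ in (-1:ℝ)..1, D ξ * G ξ| ≤ M * ∫ ξ in Icc (-ε) ε, |G ξ| := by
  have h1 : |∫ ξ in (-1:ℝ)..1, D ξ * G ξ| ≤ ∫ ξ in (-1:ℝ)..1, |D ξ * G ξ| :=
    intervalIntegral.abs_integral_le_integral_abs (by norm_num)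
  have hIndInt : Integrable ((Icc (-ε) ε).indicator (fun ξ => M * |G ξ|)) volume :=
    ((continuous_const.mul hG.abs).integrableOn_Icc).integrable_indicator measurableSet_Icc
  have h2 : (∫ ξ in (-1:ℝ)..1, |D ξ * G ξ|)
      ≤ ∫ ξ in (-1:ℝ)..1, (Icc (-ε) ε).indicator (fun ξ => M * |G ξ|) ξ := by
    apply intervalIntegral.integral_mono_on (by norm_num)
      ((hD.mul hG).abs.intervalIntegrable _ _) hIndInt.intervalIntegrable
    intro ξ _
    by_cases hmem : ξ ∈ Icc (-ε) ε
    · rw [Set.indicator_of_mem hmem, Pi.mul_apply, abs_mul]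
      exact mul_le_mul_of_nonneg_right (hDb ξ) (abs_nonneg _)
    · rw [Set.indicator_of_notMem hmem, Pi.mul_apply, abs_mul, hDsupp ξ hmem]
      simp
  have h3 : (∫ ξ in (-1:ℝ)..1, (Icc (-ε) ε).indicator (fun ξ => M * |G ξ|) ξ)
      = M * ∫ ξ in Icc (-ε) ε, |G ξ| := by
    rw [← aux_integral_eq_intervalIntegral (by norm_num)
      (fun ξ hξ => Set.indicator_of_notMem (fun hmem => hξ
        ⟨lt_of_lt_of_le (by linarith : (-1:ℝ) < -ε) hmem.1, le_trans hmem.2 (by linarith)⟩) _)]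
    rw [MeasureTheory.integral_indicator measurableSet_Icc, MeasureTheory.integral_const_mul]
  calc |∫ ξ in (-1:ℝ)..1, D ξ * G ξ| ≤ ∫ ξ in (-1:ℝ)..1, |D ξ * G ξ| := h1
    _ ≤ _ := h2
    _ = _ := h3
set_option maxHeartbeats 2000000 in
theorem stmt5 (C₁ : ℝ) (hC₁ : 0 < C₁) :
    ∃ C > 0, ∀ φ : ℕ → ℝ → ℝ,
      (∀ N, ContDiff ℝ (⊤ : ℕ∞) (φ N)) →
      (∀ N, Function.support (φ N) ⊆ Icc (-1 : ℝ) 1) →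
      (∀ N t, 0 ≤ φ N t) →
      (∀ N t, φ N (-t) = φ N t) →
      (∀ N, (∫ t : ℝ, φ N t) = 1) →
      (∀ N k, k ≤ N → ∀ t, |iteratedDeriv k (φ N) t| ≤ C₁^(k+1) * (N : ℝ)^k) →
      ∀ f : ℝ → ℝ → ℝ, Continuous (fun p : ℝ × ℝ => f p.1 p.2) →
      (∀ x y : ℝ, y < x^2 → f x y = 0) →
      ∀ ε γ : ℝ, 0 < ε → ε < 1 → ε^2/4 ≤ γ → γ < 1 →
      ∀ N : ℕ, 1 ≤ N → ∀ k : ℕ, k ≤ N →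
      |∫ x : ℝ, x^k * mean (φ N) ε γ f x| ≤
        (C/ε)^(k+1) * Real.exp (N : ℝ) * dataNorm (radon f) ε γ := by
  refine ⟨2*C₁ + 2, by linarith, ?_⟩
  intro φ hφC hφsupp hφpos hφeven hφint hφder f hf hf0 ε γ hε0 hε1 hγε hγ1 N hN k hkN
  have hγ0 : 0 < γ := lt_of_lt_of_le (by positivity) hγε
  have hγle1 : γ ≤ 1 := le_of_lt hγ1
  have hεne : ε ≠ 0 := ne_of_gt hε0
  have hεle1 : ε ≤ 1 := le_of_lt hε1
  set C : ℝ := 2*C₁ + 2 with hCdef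
  have hC0 : 0 < C := by rw [hCdef]; linarith
  -- continuity of slices
  have hfx : ∀ x : ℝ, Continuous (fun y => f x y) := fun x => hf.comp (Continuous.prodMk_right x)
  -- f vanishes on the closed region below the parabola
  have hfzero : ∀ x t : ℝ, t ≤ x^2 → f x t = 0 := by
    intro x t ht
    rcases lt_or_eq_of_le ht with h | h
    · exact hf0 x t h
    · have hEq : EqOn (fun y => f x y) (fun _ => (0:ℝ)) (Iio (x^2)) := fun y hy => hf0 x y hy
      have h2 := hEq.closure (hfx x) continuous_const
      have hmem : t ∈ closure (Iio (x^2)) := by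
        rw [closure_Iio]; exact le_of_eq h
      simpa using h2 hmem
  -- line-support lemmas
  have L1 : ∀ x ξ η : ℝ, |ξ| ≤ 1 → η ≤ 1 → 2 ≤ |x| → f x (ξ*x+η) = 0 := by
    intro x ξ η hξ hη hx
    apply hfzero
    have h1 : ξ*x ≤ |x| := by
      calc ξ*x ≤ |ξ*x| := le_abs_self _
        _ = |ξ| * |x| := abs_mul _ _
        _ ≤ 1 * |x| := by apply mul_le_mul_of_nonneg_right hξ (abs_nonneg x)
        _ = |x| := one_mul _
    nlinarith [sq_abs x, abs_nonneg x]
  have L2 : ∀ x ξ η : ℝ, |ξ| ≤ ε → η ≤ -γ → f x (ξ*x+η) = 0 := by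
    intro x ξ η hξ hη
    apply hfzero
    have hξ2 : ξ^2 ≤ ε^2 := sq_le_sq' (by linarith [abs_le.1 hξ]) (abs_le.1 hξ).2
    nlinarith [sq_nonneg (x - ξ/2)]
  -- the rescaled bump
  set ψ : ℝ → ℝ := fun t => φ N (ε⁻¹ * t) with hψdef
  have hψC : ContDiff ℝ (⊤:ℕ∞) ψ := (hφC N).comp (contDiff_const.mul contDiff_id)
  have hφiter : ∀ j, Function.support (iteratedDeriv j (φ N)) ⊆ Icc (-1:ℝ) 1 := by
    intro j
    induction j with
    | zero => simpa [iteratedDeriv_zero] using hφsupp N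
    | succ j ih =>
      rw [iteratedDeriv_succ]
      exact support_deriv_subset.trans (closure_minimal ih isClosed_Icc)
  have hφiter' : ∀ j (s : ℝ), s ∉ Icc (-1:ℝ) 1 → iteratedDeriv j (φ N) s = 0 := by
    intro j s hs
    by_contra hne
    exact hs (hφiter j hne)
  have hiterψ : ∀ j, iteratedDeriv j ψ = fun t => (ε⁻¹)^j * iteratedDeriv j (φ N) (ε⁻¹ * t) :=
    fun j => iteratedDeriv_comp_const_mul ((hφC N).of_le (by exact_mod_cast le_top)) ε⁻¹
  have hψsupp : ∀ j (s : ℝ), s ∉ Icc (-ε) ε → iteratedDeriv j ψ s = 0 := by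
    intro j s hs
    rw [hiterψ j]
    have : ε⁻¹ * s ∉ Icc (-1:ℝ) 1 := by
      simp only [mem_Icc, not_and_or, not_le] at hs ⊢
      rcases hs with h | h
      · left
        rw [show (-1:ℝ) = ε⁻¹ * (-ε) by field_simp]
        exact mul_lt_mul_of_pos_left h (inv_pos.2 hε0)
      · right
        rw [show (1:ℝ) = ε⁻¹ * ε by field_simp]
        exact mul_lt_mul_of_pos_left h (inv_pos.2 hε0)
    simp [hφiter' j _ this]
  have hψb : ∀ j (s : ℝ), s = 1 ∨ s = -1 → iteratedDeriv j ψ s = 0 := by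
    intro j s hs
    apply hψsupp j
    simp only [mem_Icc, not_and_or, not_le]
    rcases hs with rfl | rfl
    · right; linarith
    · left; linarith
  have hψbound : ∀ j, j ≤ N → ∀ t, |iteratedDeriv j ψ t| ≤ ε⁻¹^j * (C₁^(j+1) * (N:ℝ)^j) := by
    intro j hj t
    rw [hiterψ j, abs_mul, abs_pow, abs_inv, abs_of_pos hε0]
    exact mul_le_mul_of_nonneg_left (hφder N j hj _) (by positivity)
  -- mean in terms of an interval integral
  have meanEq : ∀ x : ℝ, mean (φ N) ε γ f x
      = ε⁻¹ * ∫ ξ in (-1:ℝ)..1, ψ ξ * f x (ξ*x+γ) := by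
    intro x
    have hssupp : ∀ ξ : ℝ, ξ ∉ Ioc (-1:ℝ) 1 → ψ ξ * f x (ξ*x+γ) = 0 := by
      intro ξ hξ
      have hξ' : ξ ∉ Icc (-ε) ε := by
        simp only [mem_Ioc, not_and_or, not_lt, not_le] at hξ
        intro hmem
        rcases hξ with h | h
        · have := hmem.1; linarith
        · have := hmem.2; linarith
      have hz : ψ ξ = 0 := by
        have := hψsupp 0 ξ hξ'
        rwa [iteratedDeriv_zero] at this
      rw [hz, zero_mul]
    rw [← aux_integral_eq_intervalIntegral (by norm_num) hssupp]
    by_cases hx : x = 0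
    · subst hx
      rw [mean, if_pos rfl]
      have hcongr : (fun ξ : ℝ => ψ ξ * f 0 (ξ*0+γ)) = fun ξ => ψ ξ * f 0 γ := by
        funext ξ; rw [mul_zero, zero_add]
      rw [hcongr, MeasureTheory.integral_mul_const]
      have hψint : (∫ ξ : ℝ, ψ ξ) = ε := by
        have h1 := MeasureTheory.Measure.integral_comp_mul_left (φ N) ε⁻¹
        rw [hψdef]
        simp only [smul_eq_mul] at h1
        rw [h1, inv_inv, hφint N, abs_of_pos hε0, mul_one]
      rw [hψint]
      field_simp
    · rw [mean, if_neg hx]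
      have hxabs : 0 < |x| := abs_pos.2 hx
      have hpt : ∀ y : ℝ, f x y * ((ε*|x|)⁻¹ * φ N ((γ-y)/(ε*|x|)))
          = (ε*|x|)⁻¹ * (ψ ((y-γ)/x) * f x y) := by
        intro y
        have key : φ N ((γ-y)/(ε*|x|)) = ψ ((y-γ)/x) := by
          rw [hψdef]
          rcases lt_or_gt_of_ne hx with hneg | hpos
          · rw [abs_of_neg hneg]
            show φ N ((γ-y)/(ε*(-x))) = φ N (ε⁻¹ * ((y-γ)/x))
            congr 1
            field_simp
            ring
          · rw [abs_of_pos hpos]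
            show φ N ((γ-y)/(ε*x)) = φ N (ε⁻¹ * ((y-γ)/x))
            rw [← hφeven N (ε⁻¹ * ((y-γ)/x))]
            congr 1
            field_simp
            ring
        rw [key]; ring
      rw [show (fun y : ℝ => f x y * ((ε*|x|)⁻¹ * φ N ((γ-y)/(ε*|x|))))
          = fun y => (ε*|x|)⁻¹ * (ψ ((y-γ)/x) * f x y) from funext hpt]
      rw [MeasureTheory.integral_const_mul]
      have hchg : (∫ ξ : ℝ, ψ ξ * f x (ξ*x+γ)) = |x|⁻¹ * ∫ y : ℝ, ψ ((y-γ)/x) * f x y := by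
        have h1 : (fun ξ : ℝ => ψ ξ * f x (ξ*x+γ))
            = fun ξ => (fun t => ψ ((t-γ)/x) * f x t) (x*ξ+γ) := by
          funext ξ
          simp only []
          rw [show (x*ξ+γ-γ) = x*ξ by ring, mul_div_cancel_left₀ ξ hx, mul_comm x ξ]
        rw [h1]
        have h2 := MeasureTheory.Measure.integral_comp_mul_left
          (fun t => ψ ((t+γ-γ)/x) * f x (t+γ)) x
        simp only [smul_eq_mul] at h2
        have h3 : (fun ξ : ℝ => (fun t => ψ ((t-γ)/x) * f x t) (x*ξ+γ))
            = fun ξ => (fun t => ψ ((t+γ-γ)/x) * f x (t+γ)) (x*ξ) := by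
          funext ξ; simp only []
        rw [h3, h2, MeasureTheory.integral_add_right_eq_self (fun t => ψ ((t-γ)/x) * f x t) γ]
        rw [abs_inv]
      rw [hchg]
      rw [show ((ε*|x|)⁻¹ : ℝ) = ε⁻¹ * |x|⁻¹ by rw [mul_inv]]
      ring
  -- the radon transform over lines meeting the support
  have hradon_eq : ∀ ξ η : ℝ, |ξ| ≤ 1 → η ≤ 1 →
      radon f ξ η = ∫ x in (-2:ℝ)..2, f x (ξ*x+η) := by
    intro ξ η h1 h2
    apply aux_integral_eq_intervalIntegral (by norm_num)
    intro x hx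
    apply L1 x ξ η h1 h2
    simp only [mem_Ioc, not_and_or, not_lt, not_le] at hx
    rcases hx with h | h
    · rw [abs_of_nonpos (by linarith)]; linarith
    · rw [abs_of_pos (by linarith)]; linarith
  -- data norm facts
  have hdN0 : 0 ≤ dataNorm (radon f) ε γ :=
    Real.iSup_nonneg fun η => integral_nonneg fun ξ => abs_nonneg _
  have hRbd : ∀ η ∈ Icc (-γ) γ,
      (∫ ξ in Icc (-ε) ε, |∫ x in (-2:ℝ)..2, f x (ξ*x+η)|) ≤ dataNorm (radon f) ε γ := by
    have hK : IsCompact (Icc (-2:ℝ) 2 ×ˢ Icc (-3:ℝ) 3) := isCompact_Icc.prod isCompact_Icc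
    obtain ⟨Mf, hMf⟩ := hK.exists_bound_of_continuousOn hf.continuousOn
    have hR2cont : ∀ η₀ : ℝ, Continuous fun ξ => |∫ x in (-2:ℝ)..2, f x (ξ*x+η₀)| := by
      intro η₀
      apply Continuous.abs
      apply intervalIntegral.continuous_parametric_intervalIntegral_of_continuous'
        (f := fun (ξ : ℝ) (x : ℝ) => f x (ξ*x+η₀))
      exact hf.comp ((continuous_snd).prodMk
        (((continuous_fst.mul continuous_snd)).add continuous_const))
    have hbd : ∀ η₀ : ℝ, η₀ ∈ Icc (-γ) γ → ∀ ξ ∈ Icc (-ε) ε,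
        |∫ x in (-2:ℝ)..2, f x (ξ*x+η₀)| ≤ Mf * |(2:ℝ) - -2| := by
      intro η₀ hη₀ ξ hξ
      have hξ1 : |ξ| ≤ 1 := by
        rw [abs_le]; exact ⟨by linarith [hξ.1], by linarith [hξ.2]⟩
      have hη1 : η₀ ≤ 1 := le_trans hη₀.2 hγle1
      rw [← Real.norm_eq_abs]
      apply intervalIntegral.norm_integral_le_of_norm_le_const
      intro x hx
      rw [Set.uIoc_of_le (by norm_num : (-2:ℝ) ≤ 2)] at hx
      have hx2 : |x| ≤ 2 := by rw [abs_le]; exact ⟨le_of_lt hx.1, hx.2⟩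
      have harg : ξ*x+η₀ ∈ Icc (-3:ℝ) 3 := by
        have h1 : |ξ*x| ≤ 2 := by
          rw [abs_mul]
          calc |ξ| * |x| ≤ 1 * 2 :=
            mul_le_mul hξ1 hx2 (abs_nonneg x) (by norm_num)
          _ = 2 := by norm_num
        have h2 : |η₀| ≤ 1 := by
          rw [abs_le]; exact ⟨by linarith [hη₀.1], hη1⟩
        constructor
        · nlinarith [abs_le.1 h1, abs_le.1 h2]
        · nlinarith [abs_le.1 h1, abs_le.1 h2]
      exact hMf (x, ξ*x+η₀) ⟨⟨by linarith [abs_le.1 hx2], (abs_le.1 hx2).2⟩, harg⟩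
    have hcongrR : ∀ η₀ : ℝ, η₀ ∈ Icc (-γ) γ → EqOn (fun ξ => |radon f ξ η₀|)
        (fun ξ => |∫ x in (-2:ℝ)..2, f x (ξ*x+η₀)|) (Icc (-ε) ε) := by
      intro η₀ hη₀ ξ hξ
      have hξ1 : |ξ| ≤ 1 := by
        rw [abs_le]; exact ⟨by linarith [hξ.1], by linarith [hξ.2]⟩
      simp only []
      rw [hradon_eq ξ η₀ hξ1 (le_trans hη₀.2 hγle1)]
    have hbdd : BddAbove (Set.range fun η₀ : Icc (-γ) γ =>
        ∫ ξ in Icc (-ε) ε, |radon f ξ (η₀:ℝ)|) := by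
      refine ⟨(volume (Icc (-ε) ε)).toReal * (Mf * |(2:ℝ) - -2|), ?_⟩
      rintro v ⟨η₀, rfl⟩
      calc (∫ ξ in Icc (-ε) ε, |radon f ξ (η₀:ℝ)|)
          = ∫ ξ in Icc (-ε) ε, |∫ x in (-2:ℝ)..2, f x (ξ*x+(η₀:ℝ))| :=
            MeasureTheory.setIntegral_congr_fun measurableSet_Icc (hcongrR η₀ η₀.2)
        _ ≤ ∫ _ξ in Icc (-ε) ε, Mf * |(2:ℝ) - -2| :=
            setIntegral_mono_on ((hR2cont η₀).integrableOn_Icc)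
              continuous_const.integrableOn_Icc measurableSet_Icc
              (fun ξ hξ => hbd η₀ η₀.2 ξ hξ)
        _ = (volume (Icc (-ε) ε)).toReal * (Mf * |(2:ℝ) - -2|) := by
            rw [setIntegral_const, smul_eq_mul, measureReal_def]
    intro η hη
    rw [← MeasureTheory.setIntegral_congr_fun measurableSet_Icc (hcongrR η hη)]
    exact le_ciSup hbdd ⟨η, hη⟩
  -- restrict integral to [-2,2]
  have hmean0 : ∀ x : ℝ, x ∉ Ioc (-2:ℝ) 2 → x^k * mean (φ N) ε γ f x = 0 := by
    intro x hx
    have h2x : 2 ≤ |x| := by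
      simp only [mem_Ioc, not_and_or, not_lt, not_le] at hx
      rcases hx with h | h
      · rw [abs_of_nonpos (by linarith)]; linarith
      · rw [abs_of_pos (by linarith)]; linarith
    rw [meanEq x]
    have hzero : ∀ ξ ∈ Set.uIcc (-1:ℝ) 1, ψ ξ * f x (ξ*x+γ) = (fun _ => (0:ℝ)) ξ := by
      intro ξ hξ
      rw [Set.uIcc_of_le (by norm_num : (-1:ℝ) ≤ 1)] at hξ
      rw [L1 x ξ γ (abs_le.2 ⟨hξ.1, hξ.2⟩) hγle1 h2x, mul_zero]
    rw [intervalIntegral.integral_congr hzero]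
    simp
  have hstep1 : (∫ x : ℝ, x^k * mean (φ N) ε γ f x)
      = ∫ x in (-2:ℝ)..2, x^k * mean (φ N) ε γ f x :=
    aux_integral_eq_intervalIntegral (by norm_num) hmean0
  have hstep2 : (∫ x in (-2:ℝ)..2, x^k * mean (φ N) ε γ f x)
      = ε⁻¹ * ∫ x in (-2:ℝ)..2, (x^k * ∫ ξ in (-1:ℝ)..1, ψ ξ * f x (ξ*x+γ)) := by
    rw [← intervalIntegral.integral_const_mul]
    apply intervalIntegral.integral_congr
    intro x _
    show x ^ k * mean (φ N) ε γ f x = ε⁻¹ * (x ^ k * ∫ ξ in (-1:ℝ)..1, ψ ξ * f x (ξ*x+γ))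
    rw [meanEq x]
    ring
  -- continuity helpers
  have hlin : Continuous fun p : ℝ × ℝ => f p.1 (p.2*p.1+γ) :=
    hf.comp (continuous_fst.prodMk ((continuous_snd.mul continuous_fst).add continuous_const))
  have hR2cont' : Continuous fun p : ℝ × ℝ => ∫ x in (-2:ℝ)..2, f x (p.1*x+p.2) := by
    apply intervalIntegral.continuous_parametric_intervalIntegral_of_continuous'
      (f := fun (p : ℝ × ℝ) (x : ℝ) => f x (p.1*x+p.2))
    exact hf.comp (continuous_snd.prodMk
      ((continuous_fst.fst.mul continuous_snd).add continuous_fst.snd))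
  rcases Nat.eq_zero_or_pos k with hk0 | hkpos
  · -- k = 0
    subst hk0
    have hψcont : Continuous ψ := hψC.continuous
    have hG0cont : Continuous fun ξ : ℝ => ∫ x in (-2:ℝ)..2, f x (ξ*x+γ) := by
      have := hR2cont'.comp ((continuous_id.prodMk (continuous_const : Continuous fun _:ℝ => γ)))
      exact this
    have hsimp : (∫ x in (-2:ℝ)..2, (x^(0:ℕ) * ∫ ξ in (-1:ℝ)..1, ψ ξ * f x (ξ*x+γ)))
        = ∫ x in (-2:ℝ)..2, ∫ ξ in (-1:ℝ)..1, ψ ξ * f x (ξ*x+γ) := by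
      apply intervalIntegral.integral_congr
      intro x _
      simp
    have hswap := aux_swap (F := fun x ξ => ψ ξ * f x (ξ*x+γ))
      ((hψcont.comp continuous_snd).mul hlin) (by norm_num : (-2:ℝ) ≤ 2)
      (by norm_num : (-1:ℝ) ≤ 1)
    have hpull : (∫ ξ in (-1:ℝ)..1, ∫ x in (-2:ℝ)..2, ψ ξ * f x (ξ*x+γ))
        = ∫ ξ in (-1:ℝ)..1, ψ ξ * ∫ x in (-2:ℝ)..2, f x (ξ*x+γ) :=
      intervalIntegral.integral_congr fun ξ _ => intervalIntegral.integral_const_mul _ _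
    rw [hstep1, hstep2, hsimp, hswap, hpull]
    have hDb : ∀ ξ : ℝ, |ψ ξ| ≤ C₁ := by
      intro ξ
      have := hφder N 0 (Nat.zero_le N) (ε⁻¹ * ξ)
      simpa using this
    have hDsupp : ∀ ξ : ℝ, ξ ∉ Icc (-ε) ε → ψ ξ = 0 := by
      intro ξ hξ
      have := hψsupp 0 ξ hξ
      rwa [iteratedDeriv_zero] at this
    have hb := aux_bound hψcont hG0cont hε1 hDsupp hDb
    have hIle : (∫ ξ in Icc (-ε) ε, |∫ x in (-2:ℝ)..2, f x (ξ*x+γ)|)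
        ≤ dataNorm (radon f) ε γ := hRbd γ ⟨by linarith, le_refl γ⟩
    rw [abs_mul, abs_inv, abs_of_pos hε0]
    have hC1exp : C₁ ≤ C * Real.exp N := by
      calc C₁ ≤ C := by rw [hCdef]; linarith
        _ ≤ C * Real.exp N :=
          le_mul_of_one_le_right (le_of_lt hC0) (Real.one_le_exp (by positivity))
    calc ε⁻¹ * |∫ ξ in (-1:ℝ)..1, ψ ξ * ∫ x in (-2:ℝ)..2, f x (ξ*x+γ)|
        ≤ ε⁻¹ * (C₁ * ∫ ξ in Icc (-ε) ε, |∫ x in (-2:ℝ)..2, f x (ξ*x+γ)|) :=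
          mul_le_mul_of_nonneg_left hb (inv_nonneg.2 (le_of_lt hε0))
      _ ≤ ε⁻¹ * ((C * Real.exp N) * dataNorm (radon f) ε γ) := by
          apply mul_le_mul_of_nonneg_left _ (inv_nonneg.2 (le_of_lt hε0))
          apply mul_le_mul hC1exp hIle (integral_nonneg fun ξ => abs_nonneg _)
            (by positivity)
      _ = (C/ε)^(0+1) * Real.exp N * dataNorm (radon f) ε γ := by
          rw [zero_add, pow_one, div_eq_mul_inv]
          ring
  · -- k ≥ 1
    obtain ⟨k', rfl⟩ : ∃ k', k = k'+1 := ⟨k-1, by omega⟩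
    set W : ℝ → ℝ := fun η => (γ-η)^k' / (k'.factorial : ℝ) with hWdef
    have hWcont : Continuous W := by
      rw [hWdef]
      exact ((continuous_const.sub continuous_id).pow k').div_const _
    have hWnn : ∀ η : ℝ, η ≤ γ → 0 ≤ W η := by
      intro η hη
      rw [hWdef]
      exact div_nonneg (pow_nonneg (by linarith) _) (Nat.cast_nonneg _)
    have hDkcont := iterD_cont hψC (k'+1)
    have hQcont : Continuous fun p : ℝ × ℝ => ∫ η in (-1:ℝ)..γ, W η * f p.1 (p.2*p.1+η) := by
      apply intervalIntegral.continuous_parametric_intervalIntegral_of_continuous'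
        (f := fun (p : ℝ × ℝ) (η : ℝ) => W η * f p.1 (p.2*p.1+η))
      apply Continuous.mul (hWcont.comp continuous_snd)
      exact hf.comp (continuous_fst.fst.prodMk
        (((continuous_fst.snd.mul continuous_fst.fst)).add continuous_snd))
    have hGGcont : Continuous fun ξ : ℝ =>
        ∫ x in (-2:ℝ)..2, ∫ η in (-1:ℝ)..γ, W η * f x (ξ*x+η) := by
      apply intervalIntegral.continuous_parametric_intervalIntegral_of_continuous'
        (μ := volume) (f := fun (ξ : ℝ) (x : ℝ) => ∫ η in (-1:ℝ)..γ, W η * f x (ξ*x+η))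
      exact hQcont.comp (continuous_snd.prodMk continuous_fst)
    -- Fit in terms of the η-integral
    have hFitQ : ∀ x ξ : ℝ, |ξ| ≤ 1 →
        Fit (f x) (k'+1) (ξ*x+γ) = ∫ η in (-1:ℝ)..γ, W η * f x (ξ*x+η) := by
      intro x ξ hξ1
      rw [Fit_eq_Scau (hfx x) k' (ξ*x+γ)]
      have hcv : Scau (f x) k' (ξ*x+γ)
          = ∫ η in (-(ξ*x))..γ, W η * f x (ξ*x+η) := by
        show (∫ u in (0:ℝ)..(ξ*x+γ), ((ξ*x+γ-u)^k'/(k'.factorial:ℝ)) * f x u) = _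
        have h1 := intervalIntegral.integral_comp_add_right
          (a := -(ξ*x)) (b := γ)
          (f := fun u => ((ξ*x+γ-u)^k'/(k'.factorial:ℝ)) * f x u) (ξ*x)
        rw [show -(ξ*x)+ξ*x = (0:ℝ) by ring, show γ+ξ*x = ξ*x+γ by ring] at h1
        rw [← h1]
        apply intervalIntegral.integral_congr
        intro η _
        show ((ξ*x+γ-(η+ξ*x))^k'/(k'.factorial:ℝ)) * f x (η+ξ*x) = W η * f x (ξ*x+η)
        rw [hWdef, show ξ*x+γ-(η+ξ*x) = γ-η by ring, show η+ξ*x = ξ*x+η by ring]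
      rw [hcv]
      have hcont1 : Continuous fun η => W η * f x (ξ*x+η) :=
        hWcont.mul ((hfx x).comp (continuous_const.add continuous_id))
      have hadj : (∫ η in (-1:ℝ)..(-(ξ*x)), W η * f x (ξ*x+η))
          + (∫ η in (-(ξ*x))..γ, W η * f x (ξ*x+η))
          = ∫ η in (-1:ℝ)..γ, W η * f x (ξ*x+η) :=
        intervalIntegral.integral_add_adjacent_intervals
          (hcont1.intervalIntegrable _ _) (hcont1.intervalIntegrable _ _)
      have hz : (∫ η in (-1:ℝ)..(-(ξ*x)), W η * f x (ξ*x+η)) = 0 := by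
        rw [intervalIntegral.integral_congr (g := fun _ => (0:ℝ)) ?_]
        · simp
        · intro η hη
          have hcase : η ≤ -(ξ*x) ∨ η ≤ -1 := by
            have h2 := hη.2
            rcases le_total (-(ξ*x)) (-1:ℝ) with h | h
            · right; rwa [sup_eq_left.2 h] at h2
            · left; rwa [sup_eq_right.2 h] at h2
          have hfz : f x (ξ*x+η) = 0 := by
            rcases hcase with h | h
            · apply hfzero; nlinarith [sq_nonneg x]
            · apply hfzero
              have hxx : ξ*x ≤ |x| := by
                calc ξ*x ≤ |ξ*x| := le_abs_self _
                  _ = |ξ| * |x| := abs_mul _ _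
                  _ ≤ 1 * |x| := mul_le_mul_of_nonneg_right hξ1 (abs_nonneg x)
                  _ = |x| := one_mul _
              nlinarith [sq_abs x, sq_nonneg (|x|-1)]
          show W η * f x (ξ*x+η) = 0
          rw [hfz, mul_zero]
      linarith [hadj]
    -- integration by parts step
    have hstep3 : (∫ x in (-2:ℝ)..2, (x^(k'+1) * ∫ ξ in (-1:ℝ)..1, ψ ξ * f x (ξ*x+γ)))
        = (-1:ℝ)^(k'+1) * ∫ x in (-2:ℝ)..2, ∫ ξ in (-1:ℝ)..1,
            iteratedDeriv (k'+1) ψ ξ * (∫ η in (-1:ℝ)..γ, W η * f x (ξ*x+η)) := by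
      rw [← intervalIntegral.integral_const_mul]
      apply intervalIntegral.integral_congr
      intro x _
      show x^(k'+1) * (∫ ξ in (-1:ℝ)..1, ψ ξ * f x (ξ*x+γ))
          = (-1:ℝ)^(k'+1) * ∫ ξ in (-1:ℝ)..1,
              iteratedDeriv (k'+1) ψ ξ * (∫ η in (-1:ℝ)..γ, W η * f x (ξ*x+η))
      rw [key_ibp hψC hψb (hfx x) x γ (k'+1)]
      congr 1
      apply intervalIntegral.integral_congr
      intro ξ hξ
      rw [Set.uIcc_of_le (by norm_num : (-1:ℝ) ≤ 1)] at hξ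
      show iteratedDeriv (k'+1) ψ ξ * Fit (f x) (k'+1) (ξ*x+γ) = _
      rw [hFitQ x ξ (abs_le.2 ⟨hξ.1, hξ.2⟩)]
    have hswap1 := aux_swap
      (F := fun x ξ => iteratedDeriv (k'+1) ψ ξ * (∫ η in (-1:ℝ)..γ, W η * f x (ξ*x+η)))
      ((hDkcont.comp continuous_snd).mul hQcont)
      (by norm_num : (-2:ℝ) ≤ 2) (by norm_num : (-1:ℝ) ≤ 1)
    have hstep4 : (∫ ξ in (-1:ℝ)..1, ∫ x in (-2:ℝ)..2,
          iteratedDeriv (k'+1) ψ ξ * (∫ η in (-1:ℝ)..γ, W η * f x (ξ*x+η)))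
        = ∫ ξ in (-1:ℝ)..1, iteratedDeriv (k'+1) ψ ξ *
            ∫ x in (-2:ℝ)..2, ∫ η in (-1:ℝ)..γ, W η * f x (ξ*x+η) :=
      intervalIntegral.integral_congr fun ξ _ => intervalIntegral.integral_const_mul _ _
    rw [hstep1, hstep2, hstep3, hswap1, hstep4]
    rw [abs_mul, abs_mul, abs_inv, abs_of_pos hε0, abs_pow, abs_neg, abs_one, one_pow, one_mul]
    -- bound the ξ-integral
    have hbA := aux_bound hDkcont hGGcont hε1 (hψsupp (k'+1)) (hψbound (k'+1) hkN)
    -- bound ∫_{Icc} |GG|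
    have hGGsplit : ∀ ξ : ℝ, ξ ∈ Icc (-ε) ε →
        |∫ x in (-2:ℝ)..2, ∫ η in (-1:ℝ)..γ, W η * f x (ξ*x+η)|
        ≤ ∫ η in (-γ)..γ, W η * |∫ x in (-2:ℝ)..2, f x (ξ*x+η)| := by
      intro ξ hξ
      have hξε : |ξ| ≤ ε := abs_le.2 ⟨hξ.1, hξ.2⟩
      have hsw := aux_swap (F := fun x η => W η * f x (ξ*x+η))
        ((hWcont.comp continuous_snd).mul
          (hf.comp (continuous_fst.prodMk
            ((continuous_const.mul continuous_fst).add continuous_snd))))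
        (by norm_num : (-2:ℝ) ≤ 2) (by linarith : (-1:ℝ) ≤ γ)
      rw [hsw]
      have hpull2 : (∫ η in (-1:ℝ)..γ, ∫ x in (-2:ℝ)..2, W η * f x (ξ*x+η))
          = ∫ η in (-1:ℝ)..γ, W η * ∫ x in (-2:ℝ)..2, f x (ξ*x+η) :=
        intervalIntegral.integral_congr fun η _ => intervalIntegral.integral_const_mul _ _
      rw [hpull2]
      have hRηcont : Continuous fun η => W η * ∫ x in (-2:ℝ)..2, f x (ξ*x+η) := by
        apply hWcont.mul
        exact hR2cont'.comp (continuous_const.prodMk continuous_id)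
      have hadj2 : (∫ η in (-1:ℝ)..(-γ), W η * ∫ x in (-2:ℝ)..2, f x (ξ*x+η))
          + (∫ η in (-γ)..γ, W η * ∫ x in (-2:ℝ)..2, f x (ξ*x+η))
          = ∫ η in (-1:ℝ)..γ, W η * ∫ x in (-2:ℝ)..2, f x (ξ*x+η) :=
        intervalIntegral.integral_add_adjacent_intervals
          (hRηcont.intervalIntegrable _ _) (hRηcont.intervalIntegrable _ _)
      have hz2 : (∫ η in (-1:ℝ)..(-γ), W η * ∫ x in (-2:ℝ)..2, f x (ξ*x+η)) = 0 := by
        rw [intervalIntegral.integral_congr (g := fun _ => (0:ℝ)) ?_]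
        · simp
        · intro η hη
          have hηγ : η ≤ -γ := by
            have h2 := hη.2
            rwa [sup_eq_right.2 (by linarith : (-1:ℝ) ≤ -γ)] at h2
          show W η * (∫ x in (-2:ℝ)..2, f x (ξ*x+η)) = 0
          have : (∫ x in (-2:ℝ)..2, f x (ξ*x+η)) = 0 := by
            rw [intervalIntegral.integral_congr (g := fun _ => (0:ℝ))
              (fun x _ => L2 x ξ η hξε hηγ)]
            simp
          rw [this, mul_zero]
      have heq3 : (∫ η in (-1:ℝ)..γ, W η * ∫ x in (-2:ℝ)..2, f x (ξ*x+η))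
          = ∫ η in (-γ)..γ, W η * ∫ x in (-2:ℝ)..2, f x (ξ*x+η) := by
        linarith [hadj2]
      rw [heq3]
      calc |∫ η in (-γ)..γ, W η * ∫ x in (-2:ℝ)..2, f x (ξ*x+η)|
          ≤ ∫ η in (-γ)..γ, |W η * ∫ x in (-2:ℝ)..2, f x (ξ*x+η)| :=
            intervalIntegral.abs_integral_le_integral_abs (by linarith)
        _ = ∫ η in (-γ)..γ, W η * |∫ x in (-2:ℝ)..2, f x (ξ*x+η)| := by
            apply intervalIntegral.integral_congr
            intro η hη
            have hηγ : η ≤ γ := by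
              have h2 := hη.2
              rwa [sup_eq_right.2 (by linarith : (-γ:ℝ) ≤ γ)] at h2
            show |W η * _| = W η * |_|
            rw [abs_mul, abs_of_nonneg (hWnn η hηγ)]
      done
    have habscont : Continuous fun p : ℝ × ℝ => W p.2 * |∫ x in (-2:ℝ)..2, f x (p.1*x+p.2)| :=
      (hWcont.comp continuous_snd).mul hR2cont'.abs
    have hcont2 : Continuous fun ξ : ℝ =>
        ∫ η in (-γ)..γ, W η * |∫ x in (-2:ℝ)..2, f x (ξ*x+η)| := by
      apply intervalIntegral.continuous_parametric_intervalIntegral_of_continuous'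
        (f := fun (ξ : ℝ) (η : ℝ) => W η * |∫ x in (-2:ℝ)..2, f x (ξ*x+η)|)
      exact habscont
    have hmono12 : (∫ ξ in Icc (-ε) ε,
          |∫ x in (-2:ℝ)..2, ∫ η in (-1:ℝ)..γ, W η * f x (ξ*x+η)|)
        ≤ ∫ ξ in Icc (-ε) ε, ∫ η in (-γ)..γ, W η * |∫ x in (-2:ℝ)..2, f x (ξ*x+η)| :=
      setIntegral_mono_on (hGGcont.abs.integrableOn_Icc) (hcont2.integrableOn_Icc)
        measurableSet_Icc hGGsplit
    have hswap3 : (∫ ξ in Icc (-ε) ε, ∫ η in (-γ)..γ, W η * |∫ x in (-2:ℝ)..2, f x (ξ*x+η)|)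
        = ∫ η in (-γ)..γ, ∫ ξ in (-ε)..ε, W η * |∫ x in (-2:ℝ)..2, f x (ξ*x+η)| := by
      rw [MeasureTheory.integral_Icc_eq_integral_Ioc,
        ← intervalIntegral.integral_of_le (by linarith : (-ε:ℝ) ≤ ε)]
      exact aux_swap (F := fun ξ η => W η * |∫ x in (-2:ℝ)..2, f x (ξ*x+η)|)
        habscont (by linarith) (by linarith)
    have hinner : ∀ η ∈ Icc (-γ) γ,
        (∫ ξ in (-ε)..ε, W η * |∫ x in (-2:ℝ)..2, f x (ξ*x+η)|)
        ≤ W η * dataNorm (radon f) ε γ := by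
      intro η hη
      rw [intervalIntegral.integral_const_mul]
      apply mul_le_mul_of_nonneg_left _ (hWnn η hη.2)
      rw [intervalIntegral.integral_of_le (by linarith : (-ε:ℝ) ≤ ε),
        ← MeasureTheory.integral_Icc_eq_integral_Ioc]
      exact hRbd η hη
    have hcont3 : Continuous fun η : ℝ =>
        ∫ ξ in (-ε)..ε, W η * |∫ x in (-2:ℝ)..2, f x (ξ*x+η)| := by
      apply intervalIntegral.continuous_parametric_intervalIntegral_of_continuous'
        (f := fun (η : ℝ) (ξ : ℝ) => W η * |∫ x in (-2:ℝ)..2, f x (ξ*x+η)|)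
      exact habscont.comp (continuous_snd.prodMk continuous_fst)
    have hmono4 : (∫ η in (-γ)..γ, ∫ ξ in (-ε)..ε, W η * |∫ x in (-2:ℝ)..2, f x (ξ*x+η)|)
        ≤ ∫ η in (-γ)..γ, W η * dataNorm (radon f) ε γ :=
      intervalIntegral.integral_mono_on (by linarith)
        (hcont3.intervalIntegrable _ _)
        ((hWcont.mul continuous_const).intervalIntegrable _ _) hinner
    have hWint : (∫ η in (-γ)..γ, W η)
        = (2*γ)^(k'+1) / ((k'+1).factorial : ℝ) := by
      have h1 : (∫ η in (-γ)..γ, W η)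
          = (∫ η in (-γ)..γ, (γ-η)^k') * ((k'.factorial : ℝ))⁻¹ := by
        rw [← intervalIntegral.integral_mul_const]
        apply intervalIntegral.integral_congr
        intro η _
        rw [hWdef]
        show (γ-η)^k' / (k'.factorial : ℝ) = (γ-η)^k' * ((k'.factorial : ℝ))⁻¹
        rw [div_eq_mul_inv]
      rw [h1]
      have h2 := intervalIntegral.integral_comp_sub_left
        (a := (-γ:ℝ)) (b := γ) (fun s => s^k') γ
      rw [show γ - γ = (0:ℝ) by ring, show γ - -γ = 2*γ by ring] at h2
      rw [h2, integral_pow]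
      rw [zero_pow (Nat.succ_ne_zero k')]
      have hfac : ((k'+1).factorial : ℝ) = ((k':ℝ)+1) * (k'.factorial : ℝ) := by
        exact_mod_cast congrArg (Nat.cast : ℕ → ℝ) (Nat.factorial_succ k')
      rw [hfac]
      have hk'0 : (k'.factorial : ℝ) ≠ 0 := Nat.cast_ne_zero.2 k'.factorial_ne_zero
      field_simp
      try ring
    have hWdN : (∫ η in (-γ)..γ, W η * dataNorm (radon f) ε γ)
        = (2*γ)^(k'+1) / ((k'+1).factorial : ℝ) * dataNorm (radon f) ε γ := by
      rw [intervalIntegral.integral_mul_const, hWint]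
    -- put everything together
    have hfinal1 : |∫ ξ in (-1:ℝ)..1, iteratedDeriv (k'+1) ψ ξ *
          ∫ x in (-2:ℝ)..2, ∫ η in (-1:ℝ)..γ, W η * f x (ξ*x+η)|
        ≤ ε⁻¹^(k'+1) * (C₁^(k'+1+1) * (N:ℝ)^(k'+1)) *
          ((2*γ)^(k'+1) / ((k'+1).factorial : ℝ) * dataNorm (radon f) ε γ) := by
      apply le_trans hbA
      apply mul_le_mul_of_nonneg_left _ (by positivity)
      calc (∫ ξ in Icc (-ε) ε, |∫ x in (-2:ℝ)..2, ∫ η in (-1:ℝ)..γ, W η * f x (ξ*x+η)|)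
          ≤ ∫ ξ in Icc (-ε) ε, ∫ η in (-γ)..γ, W η * |∫ x in (-2:ℝ)..2, f x (ξ*x+η)| := hmono12
        _ = ∫ η in (-γ)..γ, ∫ ξ in (-ε)..ε, W η * |∫ x in (-2:ℝ)..2, f x (ξ*x+η)| := hswap3
        _ ≤ ∫ η in (-γ)..γ, W η * dataNorm (radon f) ε γ := hmono4
        _ = (2*γ)^(k'+1) / ((k'+1).factorial : ℝ) * dataNorm (radon f) ε γ := hWdN
    -- final arithmetic
    have hkey : C₁^(k'+1+1) * (N:ℝ)^(k'+1) * ((2*γ)^(k'+1) / ((k'+1).factorial : ℝ))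
        ≤ C^(k'+1+1) * Real.exp N := by
      have h2γ : (2*γ)^(k'+1) ≤ 2^(k'+1) :=
        pow_le_pow_left₀ (by linarith) (by linarith) _
      have hNk : (N:ℝ)^(k'+1) / ((k'+1).factorial : ℝ) ≤ Real.exp N := by
        have hsum := Real.sum_le_exp_of_nonneg (Nat.cast_nonneg N : (0:ℝ) ≤ N) (k'+2)
        have hsingle : (N:ℝ)^(k'+1) / ((k'+1).factorial : ℝ)
            ≤ ∑ i ∈ Finset.range (k'+2), (N:ℝ)^i / (i.factorial : ℝ) := by
          apply Finset.single_le_sum (f := fun i => (N:ℝ)^i / (i.factorial : ℝ))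
            (fun i _ => by positivity) (Finset.self_mem_range_succ (k'+1))
        exact le_trans hsingle hsum
      have hCC : C₁^(k'+1+1) * 2^(k'+1) ≤ C^(k'+1+1) := by
        calc C₁^(k'+1+1) * 2^(k'+1) ≤ C₁^(k'+1+1) * 2^(k'+1+1) := by
              apply mul_le_mul_of_nonneg_left
                (pow_le_pow_right₀ (by norm_num) (Nat.le_succ _)) (by positivity)
          _ = (2*C₁)^(k'+1+1) := by rw [mul_pow]; ring
          _ ≤ C^(k'+1+1) := by
              apply pow_le_pow_left₀ (by positivity)
              rw [hCdef]; linarith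
      calc C₁^(k'+1+1) * (N:ℝ)^(k'+1) * ((2*γ)^(k'+1) / ((k'+1).factorial : ℝ))
          = (C₁^(k'+1+1) * (2*γ)^(k'+1)) * ((N:ℝ)^(k'+1) / ((k'+1).factorial : ℝ)) := by
            ring
        _ ≤ (C₁^(k'+1+1) * 2^(k'+1)) * Real.exp N := by
            apply mul_le_mul (mul_le_mul_of_nonneg_left h2γ (by positivity)) hNk
              (by positivity) (by positivity)
        _ ≤ C^(k'+1+1) * Real.exp N := mul_le_mul_of_nonneg_right hCC (Real.exp_nonneg _)
    calc ε⁻¹ * |∫ ξ in (-1:ℝ)..1, iteratedDeriv (k'+1) ψ ξ *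
            ∫ x in (-2:ℝ)..2, ∫ η in (-1:ℝ)..γ, W η * f x (ξ*x+η)|
        ≤ ε⁻¹ * (ε⁻¹^(k'+1) * (C₁^(k'+1+1) * (N:ℝ)^(k'+1)) *
            ((2*γ)^(k'+1) / ((k'+1).factorial : ℝ) * dataNorm (radon f) ε γ)) :=
          mul_le_mul_of_nonneg_left hfinal1 (inv_nonneg.2 (le_of_lt hε0))
      _ = ε⁻¹^(k'+1+1) * (C₁^(k'+1+1) * (N:ℝ)^(k'+1) *
            ((2*γ)^(k'+1) / ((k'+1).factorial : ℝ))) * dataNorm (radon f) ε γ := by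
          rw [pow_succ]
          ring
      _ ≤ ε⁻¹^(k'+1+1) * (C^(k'+1+1) * Real.exp N) * dataNorm (radon f) ε γ := by
          apply mul_le_mul_of_nonneg_right _ hdN0
          exact mul_le_mul_of_nonneg_left hkey (by positivity)
      _ = (C/ε)^(k'+1+1) * Real.exp N * dataNorm (radon f) ε γ := by
          rw [div_pow, div_eq_mul_inv, ← inv_pow]
          ring
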